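/- Let E be a directed graph, let H ⊆ E⁰ be saturated and hereditary, and let B ⊆ H^fin_∞. Then β(B) := {β(v) : v ∈ B} is a saturated hereditary subset of the vertex set (E/H)⁰ of the quotient graph E/H, and the set (β(B))^fin_∞ computed in the graph E/H is empty. -/

import Mathlib

/-- A (countable) directed graph `E = (E⁰, E¹, r, s)`:
a set of vertices, a set of edges, and range and source maps. -/
structure Digraph' where
  V : Type
  E : Type
  src : E → V
  rng : E → V

namespace Digraph'

variable (G : Digraph')

/-- `v ≥ w`: there is a path (possibly of length zero) from `v` to `w`. -/
def Reach (v w : G.V) : Prop :=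
  Relation.ReflTransGen (fun a b : G.V => ∃ e : G.E, G.src e = a ∧ G.rng e = b) v w

/-- A set `H` of vertices is hereditary if `v ∈ H` and `v ≥ w` imply `w ∈ H`. -/
def Hereditary (H : Set G.V) : Prop :=
  ∀ ⦃v w : G.V⦄, v ∈ H → G.Reach v w → w ∈ H

/-- A set `X` of vertices is saturated if every vertex `v` with `0 < |s⁻¹(v)| < ∞`
all of whose emitted edges have range in `X` itself belongs to `X`. -/
def Saturated (X : Set G.V) : Prop :=
  ∀ v : G.V, (G.src ⁻¹' {v}).Finite → (G.src ⁻¹' {v}).Nonempty →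
    (∀ e : G.E, G.src e = v → G.rng e ∈ X) → v ∈ X

/-- The saturation `Σ(X)`: the smallest saturated set containing `X`. -/
def saturation (X : Set G.V) : Set G.V :=
  ⋂₀ {Y : Set G.V | G.Saturated Y ∧ X ⊆ Y}

/-- `ΣH(X)`: the smallest saturated hereditary set containing `X`. -/
def satHered (X : Set G.V) : Set G.V :=
  ⋂₀ {Y : Set G.V | G.Saturated Y ∧ G.Hereditary Y ∧ X ⊆ Y}

end Digraph'

namespace Digraph'

variable (G : Digraph')

/-- `H^fin_∞`: the vertices outside `H` emitting infinitely many edges, but only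
finitely many (and at least one) into `E⁰ \ H`. -/
def HfinInf (H : Set G.V) : Set G.V :=
  {v : G.V | v ∉ H ∧ (G.src ⁻¹' {v}).Infinite ∧
    {e : G.E | G.src e = v ∧ G.rng e ∉ H}.Finite ∧
    {e : G.E | G.src e = v ∧ G.rng e ∉ H}.Nonempty}

/-- The quotient graph `E/H` of a hereditary subset `H`: vertices are the vertices
outside `H` together with a new vertex `β(v)` (encoded `Sum.inr v`) for each
`v ∈ H^fin_∞`; edges are the edges of `E` with range outside `H` together with a new
edge `β(e)` (encoded `Sum.inr e`) for each `e` with range in `H^fin_∞`, where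
`s(β(e)) = s(e)` and `r(β(e)) = β(r(e))`. -/
def quotGraph (H : Set G.V) (hH : G.Hereditary H) : Digraph' where
  V := {v : G.V // v ∉ H} ⊕ {v : G.V // v ∈ G.HfinInf H}
  E := {e : G.E // G.rng e ∉ H} ⊕ {e : G.E // G.rng e ∈ G.HfinInf H}
  src := fun f =>
    match f with
    | Sum.inl e => Sum.inl ⟨G.src e.1, fun hs =>
        e.2 (hH hs (Relation.ReflTransGen.single ⟨e.1, rfl, rfl⟩))⟩
    | Sum.inr e => Sum.inl ⟨G.src e.1, fun hs =>
        e.2.1 (hH hs (Relation.ReflTransGen.single ⟨e.1, rfl, rfl⟩))⟩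
  rng := fun f =>
    match f with
    | Sum.inl e => Sum.inl ⟨G.rng e.1, e.2⟩
    | Sum.inr e => Sum.inr ⟨G.rng e.1, e.2⟩

end Digraph'

/-- For `H` saturated hereditary and `B ⊆ H^fin_∞`, the set
`β(B) = {β(v) : v ∈ B}` is a saturated hereditary subset of `(E/H)⁰`, and
`(β(B))^fin_∞` computed in `E/H` is empty. -/
theorem stmt_10 (G : Digraph') [Countable G.V] [Countable G.E] (H : Set G.V)
    (hHsat : G.Saturated H) (hHher : G.Hereditary H) (B : Set G.V)
    (hB : B ⊆ G.HfinInf H) :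
    (G.quotGraph H hHher).Saturated
        {u : (G.quotGraph H hHher).V | ∃ w : {v : G.V // v ∈ G.HfinInf H},
          w.1 ∈ B ∧ u = Sum.inr w} ∧
    (G.quotGraph H hHher).Hereditary
        {u : (G.quotGraph H hHher).V | ∃ w : {v : G.V // v ∈ G.HfinInf H},
          w.1 ∈ B ∧ u = Sum.inr w} ∧
    (G.quotGraph H hHher).HfinInf
        {u : (G.quotGraph H hHher).V | ∃ w : {v : G.V // v ∈ G.HfinInf H},
          w.1 ∈ B ∧ u = Sum.inr w} = ∅ := by

  classical
  set Q := G.quotGraph H hHher with hQdef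
  set S : Set Q.V := {u : Q.V | ∃ w : {v : G.V // v ∈ G.HfinInf H},
          w.1 ∈ B ∧ u = Sum.inr w} with hSdef
  -- every edge's source is a Sum.inl vertex
  have hsrc : ∀ f : Q.E, ∃ u, Q.src f = Sum.inl u := by
    rintro (e | e) <;> exact ⟨_, rfl⟩
  -- Sum.inl vertices are never in S
  have hinl : ∀ u, (Sum.inl u : Q.V) ∉ S := by
    rintro u ⟨w, _, h⟩
    exact Sum.inl_ne_inr h
  -- companion edge: for the β-edge (Sum.inr e), the edge Sum.inl ⟨e.1, _⟩ exists
  -- with the same source and Sum.inl range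
  have hcomp : ∀ e : {e : G.E // G.rng e ∈ G.HfinInf H},
      Q.src (Sum.inl ⟨e.1, e.2.1⟩) = Q.src (Sum.inr e) := fun e => rfl
  refine ⟨?_, ?_, ?_⟩
  · -- Saturated
    intro v hfin hne hall
    exfalso
    obtain ⟨f, hf⟩ := hne
    cases f with
    | inl e => exact hinl _ (hall (Sum.inl e) hf)
    | inr e =>
      refine hinl _ (hall (Sum.inl ⟨e.1, e.2.1⟩) ?_)
      rw [hcomp e]; exact hf
  · -- Hereditary
    intro v w hv hreach
    rcases (Relation.ReflTransGen.cases_head hreach) with rfl | ⟨c, ⟨e, he, _⟩, _⟩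
    · exact hv
    · exfalso
      obtain ⟨w', _, rfl⟩ := hv
      obtain ⟨u, hu⟩ := hsrc e
      rw [he] at hu
      exact Sum.inr_ne_inl hu
  · -- HfinInf is empty
    ext v
    simp only [Set.mem_empty_iff_false, iff_false]
    rintro ⟨hv, hinf, hfin, hne⟩
    cases v with
    | inr w =>
      apply hinf
      have : Q.src ⁻¹' {Sum.inr w} ⊆ ∅ := by
        intro f hf
        obtain ⟨u, hu⟩ := hsrc f
        simp only [Set.mem_preimage, Set.mem_singleton_iff, hu] at hf
        exact Sum.inl_ne_inr hf
      exact (Set.subset_empty_iff.mp this) ▸ Set.finite_empty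
    | inl u =>
      apply hinf
      set T : Set Q.E := {e : Q.E | Q.src e = Sum.inl u ∧ Q.rng e ∉ S} with hTdef
      -- injective map ψ : Q.E → Q.E × Bool
      set ψ : Q.E → Q.E × Bool := fun f =>
        match f with
        | Sum.inl e => (Sum.inl e, true)
        | Sum.inr e => (Sum.inl ⟨e.1, e.2.1⟩, false) with hψdef
      have hψinj : Function.Injective ψ := by
        rintro (e | e) (e' | e') h <;> simp only [hψdef, Prod.mk.injEq] at h <;> replace h := Prod.mk.inj h
        · rw [h.1]
        · exact absurd h.2 (by simp)
        · exact absurd h.2 (by simp)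
        · obtain ⟨h1, -⟩ := h
          have h2 := Sum.inl.inj h1
          have h3 : e.1 = e'.1 := by injection h2
          exact congrArg Sum.inr (Subtype.ext h3)
      have hsub : Q.src ⁻¹' {Sum.inl u} ⊆ ψ ⁻¹' (T ×ˢ (Set.univ : Set Bool)) := by
        rintro (e | e) hf
        · exact ⟨⟨hf, hinl _⟩, trivial⟩
        · refine ⟨⟨?_, hinl _⟩, trivial⟩
          rw [hcomp e]; exact hf
      refine Set.Finite.subset ?_ hsub
      exact Set.Finite.preimage (Function.Injective.injOn hψinj) (hfin.prod (Set.finite_univ))
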